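/- Let A be a unital C*-algebra and let τ : A → ℂ be a faithful tracial state. Then for every element a of A, the quantity (τ((a*a)^k))^{1/(2k)} converges as k → ∞, and its limit equals the norm ‖a‖ of a. -/

import Mathlib

open Filter Topology
open scoped ComplexOrder

section Aux
variable {A : Type*} [CStarAlgebra A] [PartialOrder A] [StarOrderedRing A]

lemma tau_nonneg_aux (τ : A →ₗ[ℂ] ℂ) (hpos : ∀ a : A, 0 ≤ τ (star a * a))
    {x : A} (hx : 0 ≤ x) : 0 ≤ τ x := by
  have h1 : star (CFC.sqrt x) * CFC.sqrt x = x := by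
    rw [(IsSelfAdjoint.of_nonneg (CFC.sqrt_nonneg (a := x))).star_eq, CFC.sqrt_mul_sqrt_self x hx]
  simpa [h1] using hpos (CFC.sqrt x)

lemma tau_mono_aux (τ : A →ₗ[ℂ] ℂ) (hpos : ∀ a : A, 0 ≤ τ (star a * a))
    {x y : A} (hxy : x ≤ y) : (τ x).re ≤ (τ y).re := by
  have := tau_nonneg_aux τ hpos (sub_nonneg.mpr hxy)
  rw [map_sub] at this
  have h2 := (Complex.le_def.mp this).1
  simp at h2
  linarith

lemma tau_algebraMap_aux (τ : A →ₗ[ℂ] ℂ) (hstate : τ 1 = 1) (r : ℝ) :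
    τ (algebraMap ℝ A r) = (r : ℂ) := by
  rw [Algebra.algebraMap_eq_smul_one, ← algebraMap_smul ℂ r (1 : A), map_smul, hstate]
  simp [Algebra.algebraMap_eq_smul_one]

end Aux

section Key
variable {A : Type*} [CStarAlgebra A] [PartialOrder A] [StarOrderedRing A]

set_option maxHeartbeats 1000000 in
lemma tau_key_aux [Nontrivial A] (τ : A →ₗ[ℂ] ℂ) (hstate : τ 1 = 1)
    (hpos : ∀ a : A, 0 ≤ τ (star a * a))
    (hfaithful : ∀ a : A, τ (star a * a) = 0 → a = 0)
    {b : A} (hb : 0 ≤ b) {r : ℝ} (hr0 : 0 ≤ r) (hrb : r < ‖b‖) :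
    ∃ c : ℝ, 0 < c ∧ c ≤ 1 ∧ ∀ k : ℕ, r ^ k * c ≤ (τ (b ^ k)).re := by
  have hbsa : IsSelfAdjoint b := .of_nonneg hb
  set d : ℝ := ‖b‖ - r with hd
  have hd0 : 0 < d := by simp [hd]; linarith
  set f : ℝ → ℝ := fun t => min 1 (max 0 ((t - r) / d)) with hf
  have hfc : Continuous f := by fun_prop
  have hfc2 : ContinuousOn f (spectrum ℝ b) := hfc.continuousOn
  have hff : ContinuousOn (fun t => f t * f t) (spectrum ℝ b) := (hfc.mul hfc).continuousOn
  have hf0 : ∀ t, 0 ≤ f t := fun t => le_min zero_le_one (le_max_left _ _)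
  have hf1 : ∀ t, f t ≤ 1 := fun t => min_le_left _ _
  set g : A := cfc f b with hg
  have hg0 : 0 ≤ g := cfc_nonneg fun t _ => hf0 t
  have hgsa : IsSelfAdjoint g := .of_nonneg hg0
  have hgne : g ≠ 0 := by
    have h1 : (1 : ℝ) ∈ spectrum ℝ g := by
      rw [hg, cfc_map_spectrum (ha := hbsa) (hf := hfc2)]
      refine ⟨‖b‖, CStarAlgebra.norm_mem_spectrum_of_nonneg hb, ?_⟩
      simp only [hf]
      rw [div_self hd0.ne']
      norm_num
    intro h
    rw [h, spectrum.zero_eq] at h1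
    norm_num at h1
  have hτg : 0 ≤ τ (star g * g) := hpos g
  have hτgne : τ (star g * g) ≠ 0 := fun h => hgne (hfaithful g h)
  set c : ℝ := (τ (star g * g)).re with hc
  have him : (τ (star g * g)).im = 0 := by
    have := (Complex.le_def.mp hτg).2; simpa using this.symm
  have hc0 : 0 < c := by
    rcases lt_or_eq_of_le (by simpa [hc] using (Complex.le_def.mp hτg).1) with h | h
    · exact h
    · exact absurd (Complex.ext h.symm him) hτgne
  have hgg : star g * g = g * g := by rw [hgsa.star_eq]
  have hgg_le : g * g ≤ 1 := by
    rw [hg, ← cfc_mul f f b hfc2 hfc2, ← cfc_one (R := ℝ) b hbsa]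
    refine cfc_mono (hf := hff) (hg := continuousOn_const) fun t _ => by
      calc f t * f t ≤ 1 * 1 := mul_le_mul (hf1 t) (hf1 t) (hf0 t) zero_le_one
        _ = 1 := one_mul 1
  have hc1 : c ≤ 1 := by
    have := tau_mono_aux τ hpos hgg_le
    rw [hstate] at this
    simpa [hc, hgg] using this
  refine ⟨c, hc0, hc1, fun k => ?_⟩
  have hop : (r ^ k) • (star g * g) ≤ b ^ k := by
    rw [hgg, hg, ← cfc_mul f f b hfc2 hfc2, ← cfc_const_mul (r ^ k) (fun t => f t * f t) b
      (hf := hff), ← cfc_pow_id (R := ℝ) b k hbsa]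
    refine cfc_mono (hf := (continuousOn_const.mul hff))
      (hg := (continuous_pow k).continuousOn) fun t ht => ?_
    have ht0 : 0 ≤ t := spectrum_nonneg_of_nonneg hb ht
    by_cases htr : t ≤ r
    · have hft : f t = 0 := by
        simp only [hf]
        have h1 : (t - r) / d ≤ 0 := div_nonpos_of_nonpos_of_nonneg (by linarith) hd0.le
        rw [sup_eq_left.mpr h1, inf_eq_right.mpr zero_le_one]
      rw [hft]
      simpa using pow_nonneg ht0 k
    · push_neg at htr
      calc r ^ k * (f t * f t) ≤ r ^ k * 1 := by
            have : f t * f t ≤ 1 := by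
              calc f t * f t ≤ 1 * 1 := mul_le_mul (hf1 t) (hf1 t) (hf0 t) zero_le_one
                _ = 1 := one_mul 1
            exact mul_le_mul_of_nonneg_left this (pow_nonneg hr0 k)
        _ = r ^ k := mul_one _
        _ ≤ t ^ k := pow_le_pow_left₀ hr0 htr.le k
  have := tau_mono_aux τ hpos hop
  rw [← algebraMap_smul ℂ (r ^ k) (star g * g), map_smul, smul_eq_mul] at this
  simpa [Complex.mul_re, him, ← Complex.ofReal_pow] using this

end Key

set_option maxHeartbeats 1000000 in
/-- Let `A` be a unital C*-algebra and `τ : A → ℂ` a faithful tracial state.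
Then for every `a : A`, the quantity `(τ((a* a)^k))^(1/(2k))` converges as `k → ∞` to `‖a‖`. -/
theorem norm_eq_lim_trace_pow
    {A : Type*} [NormedRing A] [StarRing A] [CStarRing A]
    [NormedAlgebra ℂ A] [StarModule ℂ A] [CompleteSpace A]
    (τ : A →ₗ[ℂ] ℂ)
    (hstate : τ 1 = 1)
    (hpos : ∀ a : A, 0 ≤ τ (star a * a))
    (htracial : ∀ a b : A, τ (a * b) = τ (b * a))
    (hfaithful : ∀ a : A, τ (star a * a) = 0 → a = 0)
    (a : A) :
    Tendsto (fun k : ℕ => (τ ((star a * a) ^ k)).re ^ ((1 : ℝ) / (2 * k)))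
      atTop (𝓝 ‖a‖) := by
  letI : CStarAlgebra A := ⟨⟩
  letI := CStarAlgebra.spectralOrder A
  haveI := CStarAlgebra.spectralOrderedRing A
  set b : A := star a * a with hbdef
  have hb : 0 ≤ b := star_mul_self_nonneg a
  by_cases ha : a = 0
  · subst ha
    have : ∀ k : ℕ, 1 ≤ k → (τ ((star (0 : A) * 0) ^ k)).re ^ ((1 : ℝ) / (2 * k)) = 0 := by
      intro k hk
      rw [star_zero, mul_zero, zero_pow (by omega), map_zero]
      simp only [Complex.zero_re]
      rw [Real.zero_rpow (by positivity)]
    rw [norm_zero]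
    refine Tendsto.congr' ?_ tendsto_const_nhds
    filter_upwards [eventually_ge_atTop 1] with k hk
    exact (this k hk).symm
  · haveI : Nontrivial A := ⟨⟨a, 0, ha⟩⟩
    set L : ℝ := ‖a‖ with hL
    have hL0 : 0 < L := norm_pos_iff.mpr ha
    have hbnorm : ‖b‖ = L ^ 2 := by
      rw [hbdef, CStarRing.norm_star_mul_self, sq]
    -- upper bound
    have hub : ∀ k : ℕ, 1 ≤ k → (τ (b ^ k)).re ≤ L ^ (2 * k) := by
      intro k hk
      have h1 : b ^ k ≤ algebraMap ℝ A ‖b ^ k‖ :=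
        IsSelfAdjoint.le_algebraMap_norm_self (ha := .of_nonneg (CStarAlgebra.pow_nonneg hb k))
      have h2 := tau_mono_aux τ hpos h1
      rw [tau_algebraMap_aux τ hstate, Complex.ofReal_re] at h2
      calc (τ (b ^ k)).re ≤ ‖b ^ k‖ := h2
        _ ≤ ‖b‖ ^ k := norm_pow_le' b hk
        _ = L ^ (2 * k) := by rw [hbnorm, ← pow_mul]
    have hre0 : ∀ k : ℕ, 0 ≤ (τ (b ^ k)).re := by
      intro k
      have := tau_nonneg_aux τ hpos (CStarAlgebra.pow_nonneg hb k)
      simpa using (Complex.le_def.mp this).1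
    rw [Metric.tendsto_nhds]
    intro ε hε
    set s : ℝ := max (L - ε / 2) (L / 2) with hs
    have hs0 : 0 < s := lt_max_of_lt_right (by linarith)
    have hsL : s < L := max_lt (by linarith) (by linarith)
    have hsε : L - ε < s := lt_of_lt_of_le (by linarith) (le_max_left _ _)
    have hrb : s ^ 2 < ‖b‖ := by
      rw [hbnorm]
      exact pow_lt_pow_left₀ hsL hs0.le (by norm_num)
    obtain ⟨c, hc0, hc1, hineq⟩ :=
      tau_key_aux τ hstate hpos hfaithful hb (sq_nonneg s) hrb
    -- the lower sequence tends to s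
    have h12k : Tendsto (fun k : ℕ => (1 : ℝ) / (2 * k)) atTop (𝓝 0) := by
      have h1 : Tendsto (fun k : ℕ => (2 : ℝ) * k) atTop atTop :=
        (tendsto_natCast_atTop_atTop (R := ℝ)).const_mul_atTop two_pos
      exact h1.inv_tendsto_atTop.congr fun k => (one_div _).symm
    have hcl : Tendsto (fun k : ℕ => c ^ ((1 : ℝ) / (2 * k))) atTop (𝓝 1) := by
      have := (Real.continuousAt_const_rpow (a := c) hc0.ne').tendsto.comp h12k
      simpa [Function.comp_def] using this
    have hsl : Tendsto (fun k : ℕ => s * c ^ ((1 : ℝ) / (2 * k))) atTop (𝓝 s) := by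
      simpa using hcl.const_mul s
    have hev : ∀ᶠ k : ℕ in atTop, L - ε < s * c ^ ((1 : ℝ) / (2 * k)) :=
      hsl.eventually (lt_mem_nhds hsε)
    filter_upwards [eventually_ge_atTop 1, hev] with k hk hlk
    have h2k : (0 : ℝ) < 2 * k := by positivity
    have he : (0 : ℝ) < 1 / (2 * k) := by positivity
    -- upper: x ≤ L
    have hxu : (τ (b ^ k)).re ^ ((1 : ℝ) / (2 * k)) ≤ L := by
      calc (τ (b ^ k)).re ^ ((1 : ℝ) / (2 * k))
          ≤ (L ^ (2 * k)) ^ ((1 : ℝ) / (2 * k)) :=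
            Real.rpow_le_rpow (hre0 k) (hub k hk) he.le
        _ = L := by
            rw [← Real.rpow_natCast L (2 * k), ← Real.rpow_mul hL0.le]
            push_cast
            rw [mul_one_div_cancel h2k.ne', Real.rpow_one]
    -- lower
    have hxl : s * c ^ ((1 : ℝ) / (2 * k)) ≤ (τ (b ^ k)).re ^ ((1 : ℝ) / (2 * k)) := by
      have h1 : s ^ (2 * k) * c ≤ (τ (b ^ k)).re := by
        have := hineq k
        rwa [← pow_mul] at this
      calc s * c ^ ((1 : ℝ) / (2 * k))
          = (s ^ (2 * k) * c) ^ ((1 : ℝ) / (2 * k)) := by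
            rw [Real.mul_rpow (by positivity) hc0.le, ← Real.rpow_natCast s (2 * k),
              ← Real.rpow_mul hs0.le]
            push_cast
            rw [mul_one_div_cancel h2k.ne', Real.rpow_one]
        _ ≤ (τ (b ^ k)).re ^ ((1 : ℝ) / (2 * k)) :=
            Real.rpow_le_rpow (by positivity) h1 he.le
    rw [Real.dist_eq, abs_lt]
    constructor <;> [linarith; linarith]
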